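/- Assume the positivity condition θ_k ∈ (0,π) for all 1 ≤ k ≤ N with ∑_{k=1}^N θ_k = 2π. Then the following are equivalent: (1) for all 1 ≤ j, k ≤ N−2 there exist integers p, q, not both zero, such that p·sin(φ_N−φ_j)·sin(φ_{N−1}−φ_k) = q·sin(φ_N−φ_k)·sin(φ_{N−1}−φ_j) (i.e., the ratio sin(φ_N−φ_k)sin(φ_{N−1}−φ_j) / (sin(φ_N−φ_j)sin(φ_{N−1}−φ_k)) lies in ℚ ∪ {∞}); (2) there exist nonzero real numbers ε_1,…,ε_{N−2}, ε_{N−1}, ε_N such that v_j·ε_j/ε_{N−1} ∈ ℤ and w_j·ε_j/ε_N ∈ ℤ for all 1 ≤ j ≤ N−2. -/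

import Mathlib

/-- The cumulative angle `φ_k = ∑_{a=1}^k θ_a`. -/
noncomputable def phiAng (θ : ℕ → ℝ) (k : ℕ) : ℝ := ∑ a ∈ Finset.Icc 1 k, θ a

/-- The signed-area quadratic form `Q` on `ℝ^{N-2}` (coordinates indexed `1,…,N-2`). -/
noncomputable def Qform (N : ℕ) (θ : ℕ → ℝ) (lam : ℕ → ℝ) : ℝ :=
  -(1/2) * ∑ j ∈ Finset.Icc 1 (N-2),
      Real.sin (phiAng θ N - phiAng θ j) * Real.sin (phiAng θ (N-1) - phiAng θ j)
        / Real.sin (θ N) * (lam j)^2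
  - ∑ j ∈ Finset.Icc 1 (N-2), ∑ k ∈ Finset.Icc (j+1) (N-2),
      Real.sin (phiAng θ N - phiAng θ j) * Real.sin (phiAng θ (N-1) - phiAng θ k)
        / Real.sin (θ N) * (lam j * lam k)

/-- The vector `v`, `v_j = -sin(φ_N - φ_j)/sin(θ_N)`. -/
noncomputable def vvec (N : ℕ) (θ : ℕ → ℝ) (j : ℕ) : ℝ :=
  -(Real.sin (phiAng θ N - phiAng θ j)) / Real.sin (θ N)

/-- The vector `w`, `w_j = sin(φ_{N-1} - φ_j)/sin(θ_N)`. -/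
noncomputable def wvec (N : ℕ) (θ : ℕ → ℝ) (j : ℕ) : ℝ :=
  Real.sin (phiAng θ (N-1) - phiAng θ j) / Real.sin (θ N)

/-- The extended side lengths: `λ_k` for `k ≤ N-2`, `λ_{N-1} = vᵀλ`, `λ_N = wᵀλ`. -/
noncomputable def lamExt (N : ℕ) (θ : ℕ → ℝ) (lam : ℕ → ℝ) (k : ℕ) : ℝ :=
  if k = N - 1 then ∑ j ∈ Finset.Icc 1 (N-2), vvec N θ j * lam j
  else if k = N then ∑ j ∈ Finset.Icc 1 (N-2), wvec N θ j * lam j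
  else lam k

/-- Equivalence of the rationality conditions: all ratios
`sin(φ_N-φ_k)sin(φ_{N-1}-φ_j)/(sin(φ_N-φ_j)sin(φ_{N-1}-φ_k))` lie in `ℚ ∪ {∞}` if and only
if there are nonzero `ε_1,…,ε_N` with `v_j ε_j/ε_{N-1} ∈ ℤ` and `w_j ε_j/ε_N ∈ ℤ`. -/
lemma aux_build (N : ℕ) (hN : 3 ≤ N) (S T : ℕ → ℝ) (d : ℝ) (hd : d ≠ 0)
    (hnb : ∀ j, 1 ≤ j → j ≤ N-2 → S j = 0 → T j ≠ 0)
    (c : ℝ) (hc : c ≠ 0)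
    (Hc : ∀ j, 1 ≤ j → j ≤ N-2 → S j ≠ 0 → T j ≠ 0 →
        ∃ p q : ℤ, q ≠ 0 ∧ (q:ℝ) * (T j * c) = (p:ℝ) * S j) :
    ∃ ε : ℕ → ℝ, (∀ k, 1 ≤ k → k ≤ N → ε k ≠ 0) ∧
      ∀ j, 1 ≤ j → j ≤ N-2 →
        (∃ z : ℤ, (-(S j) / d) * ε j / ε (N-1) = (z:ℝ)) ∧
        (∃ z : ℤ, (T j / d) * ε j / ε N = (z:ℝ)) := by
  have key : ∀ j : ℕ, ∃ e : ℝ, e ≠ 0 ∧ (1 ≤ j → j ≤ N-2 →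
      (∃ z : ℤ, (-(S j)/d) * e / c = (z:ℝ)) ∧ (∃ z : ℤ, (T j / d) * e / (1:ℝ) = (z:ℝ))) := by
    intro j
    by_cases hj : 1 ≤ j ∧ j ≤ N-2
    · obtain ⟨hj1, hj2⟩ := hj
      by_cases hs : S j = 0
      · have ht := hnb j hj1 hj2 hs
        refine ⟨d / T j, div_ne_zero hd ht, fun _ _ => ⟨⟨0, ?_⟩, ⟨1, ?_⟩⟩⟩
        · rw [hs]; simp
        · push_cast; field_simp
      · by_cases ht : T j = 0
        · refine ⟨-(d*c)/S j,
            div_ne_zero (neg_ne_zero.mpr (mul_ne_zero hd hc)) hs,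
            fun _ _ => ⟨⟨1, ?_⟩, ⟨0, ?_⟩⟩⟩
          · push_cast; field_simp
          · rw [ht]; simp
        · obtain ⟨p, q, hq, hpq⟩ := Hc j hj1 hj2 hs ht
          have hq' : (q:ℝ) ≠ 0 := Int.cast_ne_zero.mpr hq
          refine ⟨-(d*c*(q:ℝ))/S j,
            div_ne_zero (neg_ne_zero.mpr (mul_ne_zero (mul_ne_zero hd hc) hq')) hs,
            fun _ _ => ⟨⟨q, ?_⟩, ⟨-p, ?_⟩⟩⟩
          · field_simp
          · push_cast
            field_simp
            linear_combination (-1 : ℝ) * hpq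
    · exact ⟨1, one_ne_zero, fun h1 h2 => absurd ⟨h1, h2⟩ hj⟩
  choose f hf using key
  refine ⟨fun k => if k = N-1 then c else if k = N then 1 else f k, ?_, ?_⟩
  · intro k _ _
    dsimp only
    split_ifs with h1 h2
    · exact hc
    · exact one_ne_zero
    · exact (hf k).1
  · intro j hj1 hj2
    have hjne1 : j ≠ N-1 := by omega
    have hjne2 : j ≠ N := by omega
    have hNne : ¬(N = N-1) := by omega
    simp only [hjne1, hjne2, hNne, if_false, if_true, ite_true, ite_false]
    exact (hf j).2 hj1 hj2

theorem stmt8 (N : ℕ) (hN : 3 ≤ N) (θ : ℕ → ℝ)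
    (hθ : ∀ k, 1 ≤ k → k ≤ N → θ k ∈ Set.Ioo 0 Real.pi)
    (hsum : ∑ k ∈ Finset.Icc 1 N, θ k = 2 * Real.pi) :
    (∀ j k, 1 ≤ j → j ≤ N - 2 → 1 ≤ k → k ≤ N - 2 →
        ∃ p q : ℤ, ¬(p = 0 ∧ q = 0) ∧
          (p : ℝ) * (Real.sin (phiAng θ N - phiAng θ j) * Real.sin (phiAng θ (N-1) - phiAng θ k))
            = (q : ℝ) * (Real.sin (phiAng θ N - phiAng θ k) * Real.sin (phiAng θ (N-1) - phiAng θ j)))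
      ↔ (∃ ε : ℕ → ℝ, (∀ k, 1 ≤ k → k ≤ N → ε k ≠ 0) ∧
          ∀ j, 1 ≤ j → j ≤ N - 2 →
            (∃ z : ℤ, vvec N θ j * ε j / ε (N-1) = (z : ℝ)) ∧
            (∃ z : ℤ, wvec N θ j * ε j / ε N = (z : ℝ))) := by
  have hθN := hθ N (by omega) le_rfl
  have hd : Real.sin (θ N) ≠ 0 :=
    ne_of_gt (Real.sin_pos_of_pos_of_lt_pi hθN.1 hθN.2)
  have hφ : phiAng θ N = phiAng θ (N-1) + θ N := by
    have h1 : N - 1 + 1 = N := by omega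
    have h2 := Finset.sum_Icc_succ_top (a := 1) (b := N - 1) (f := θ) (by omega)
    rw [h1] at h2
    exact h2
  have hnb : ∀ j, Real.sin (phiAng θ N - phiAng θ j) = 0 →
      Real.sin (phiAng θ (N-1) - phiAng θ j) ≠ 0 := by
    intro j hs ht
    apply hd
    have he : θ N = (phiAng θ N - phiAng θ j) - (phiAng θ (N-1) - phiAng θ j) := by
      rw [hφ]; ring
    rw [he, Real.sin_sub, hs, ht]; ring
  constructor
  · intro H
    by_cases hex : ∃ j0, 1 ≤ j0 ∧ j0 ≤ N-2 ∧ Real.sin (phiAng θ N - phiAng θ j0) ≠ 0 ∧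
        Real.sin (phiAng θ (N-1) - phiAng θ j0) ≠ 0
    · obtain ⟨j0, hj01, hj02, hs0, ht0⟩ := hex
      have hc : Real.sin (phiAng θ N - phiAng θ j0) / Real.sin (phiAng θ (N-1) - phiAng θ j0) ≠ 0 :=
        div_ne_zero hs0 ht0
      have Hc : ∀ j, 1 ≤ j → j ≤ N-2 → Real.sin (phiAng θ N - phiAng θ j) ≠ 0 →
          Real.sin (phiAng θ (N-1) - phiAng θ j) ≠ 0 →
          ∃ p q : ℤ, q ≠ 0 ∧ (q:ℝ) * (Real.sin (phiAng θ (N-1) - phiAng θ j) *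
              (Real.sin (phiAng θ N - phiAng θ j0) / Real.sin (phiAng θ (N-1) - phiAng θ j0)))
            = (p:ℝ) * Real.sin (phiAng θ N - phiAng θ j) := by
        intro j hj1 hj2 hs ht
        obtain ⟨p, q, hpq, heq⟩ := H j j0 hj1 hj2 hj01 hj02
        have hq : q ≠ 0 := by
          rintro rfl
          simp only [Int.cast_zero, zero_mul] at heq
          rcases mul_eq_zero.mp heq with h | h
          · exact hpq ⟨by exact_mod_cast h, rfl⟩
          · rcases mul_eq_zero.mp h with h' | h'
            · exact hs h'
            · exact ht0 h'
        refine ⟨p, q, hq, ?_⟩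
        field_simp
        linear_combination -heq
      obtain ⟨ε, hε1, hε2⟩ := aux_build N hN
        (fun j => Real.sin (phiAng θ N - phiAng θ j))
        (fun j => Real.sin (phiAng θ (N-1) - phiAng θ j))
        (Real.sin (θ N)) hd (fun j _ _ hs => hnb j hs) _ hc Hc
      exact ⟨ε, hε1, hε2⟩
    · have Hc : ∀ j, 1 ≤ j → j ≤ N-2 → Real.sin (phiAng θ N - phiAng θ j) ≠ 0 →
          Real.sin (phiAng θ (N-1) - phiAng θ j) ≠ 0 →
          ∃ p q : ℤ, q ≠ 0 ∧ (q:ℝ) * (Real.sin (phiAng θ (N-1) - phiAng θ j) * (1:ℝ))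
            = (p:ℝ) * Real.sin (phiAng θ N - phiAng θ j) := by
        intro j hj1 hj2 hs ht
        exact absurd ⟨j, hj1, hj2, hs, ht⟩ hex
      obtain ⟨ε, hε1, hε2⟩ := aux_build N hN
        (fun j => Real.sin (phiAng θ N - phiAng θ j))
        (fun j => Real.sin (phiAng θ (N-1) - phiAng θ j))
        (Real.sin (θ N)) hd (fun j _ _ hs => hnb j hs) 1 one_ne_zero Hc
      exact ⟨ε, hε1, hε2⟩
  · rintro ⟨ε, hε0, hεint⟩ j k hj1 hj2 hk1 hk2
    obtain ⟨zj, hzj⟩ := (hεint j hj1 hj2).1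
    obtain ⟨yj, hyj⟩ := (hεint j hj1 hj2).2
    obtain ⟨zk, hzk⟩ := (hεint k hk1 hk2).1
    obtain ⟨yk, hyk⟩ := (hεint k hk1 hk2).2
    have hεj : ε j ≠ 0 := hε0 j hj1 (by omega)
    have hεk : ε k ≠ 0 := hε0 k hk1 (by omega)
    have hεN1 : ε (N-1) ≠ 0 := hε0 (N-1) (by omega) (by omega)
    have hεN : ε N ≠ 0 := hε0 N (by omega) le_rfl
    unfold vvec at hzj hzk
    unfold wvec at hyj hyk
    have hSj : Real.sin (phiAng θ N - phiAng θ j) * ε j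
        = -((zj:ℝ) * (Real.sin (θ N) * ε (N-1))) := by
      field_simp at hzj
      linarith
    have hSk : Real.sin (phiAng θ N - phiAng θ k) * ε k
        = -((zk:ℝ) * (Real.sin (θ N) * ε (N-1))) := by
      field_simp at hzk
      linarith
    have hTj : Real.sin (phiAng θ (N-1) - phiAng θ j) * ε j
        = (yj:ℝ) * (Real.sin (θ N) * ε N) := by
      field_simp at hyj
      linarith
    have hTk : Real.sin (phiAng θ (N-1) - phiAng θ k) * ε k
        = (yk:ℝ) * (Real.sin (θ N) * ε N) := by
      field_simp at hyk
      linarith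
    by_cases hz : zk * yj = 0 ∧ zj * yk = 0
    · refine ⟨1, 1, by norm_num, ?_⟩
      have h1 : Real.sin (phiAng θ N - phiAng θ j) * Real.sin (phiAng θ (N-1) - phiAng θ k) = 0 := by
        have e1 : Real.sin (phiAng θ N - phiAng θ j) * Real.sin (phiAng θ (N-1) - phiAng θ k)
            * (ε j * ε k) = 0 := by
          have hc2 : ((zj:ℝ) * yk) = 0 := by exact_mod_cast hz.2
          calc Real.sin (phiAng θ N - phiAng θ j) * Real.sin (phiAng θ (N-1) - phiAng θ k)
              * (ε j * ε k)
              = (Real.sin (phiAng θ N - phiAng θ j) * ε j)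
                * (Real.sin (phiAng θ (N-1) - phiAng θ k) * ε k) := by ring
            _ = -((zj:ℝ) * (Real.sin (θ N) * ε (N-1))) * ((yk:ℝ) * (Real.sin (θ N) * ε N)) := by
                rw [hSj, hTk]
            _ = -(((zj:ℝ) * yk) * ((Real.sin (θ N) * ε (N-1)) * (Real.sin (θ N) * ε N))) := by ring
            _ = 0 := by rw [hc2]; ring
        have := mul_eq_zero.mp e1
        rcases this with h | h
        · exact h
        · exact absurd h (mul_ne_zero hεj hεk)
      have h2 : Real.sin (phiAng θ N - phiAng θ k) * Real.sin (phiAng θ (N-1) - phiAng θ j) = 0 := by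
        have e1 : Real.sin (phiAng θ N - phiAng θ k) * Real.sin (phiAng θ (N-1) - phiAng θ j)
            * (ε j * ε k) = 0 := by
          have hc2 : ((zk:ℝ) * yj) = 0 := by exact_mod_cast hz.1
          calc Real.sin (phiAng θ N - phiAng θ k) * Real.sin (phiAng θ (N-1) - phiAng θ j)
              * (ε j * ε k)
              = (Real.sin (phiAng θ N - phiAng θ k) * ε k)
                * (Real.sin (phiAng θ (N-1) - phiAng θ j) * ε j) := by ring
            _ = -((zk:ℝ) * (Real.sin (θ N) * ε (N-1))) * ((yj:ℝ) * (Real.sin (θ N) * ε N)) := by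
                rw [hSk, hTj]
            _ = -(((zk:ℝ) * yj) * ((Real.sin (θ N) * ε (N-1)) * (Real.sin (θ N) * ε N))) := by ring
            _ = 0 := by rw [hc2]; ring
        have := mul_eq_zero.mp e1
        rcases this with h | h
        · exact h
        · exact absurd h (mul_ne_zero hεj hεk)
      rw [h1, h2]
    · refine ⟨zk * yj, zj * yk, by tauto, ?_⟩
      apply mul_right_cancel₀ (mul_ne_zero hεj hεk)
      push_cast
      calc ((zk:ℝ) * yj) * (Real.sin (phiAng θ N - phiAng θ j)
              * Real.sin (phiAng θ (N-1) - phiAng θ k)) * (ε j * ε k)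
          = ((zk:ℝ) * yj) * ((Real.sin (phiAng θ N - phiAng θ j) * ε j)
              * (Real.sin (phiAng θ (N-1) - phiAng θ k) * ε k)) := by ring
        _ = ((zk:ℝ) * yj) * (-((zj:ℝ) * (Real.sin (θ N) * ε (N-1)))
              * ((yk:ℝ) * (Real.sin (θ N) * ε N))) := by rw [hSj, hTk]
        _ = ((zj:ℝ) * yk) * (-((zk:ℝ) * (Real.sin (θ N) * ε (N-1)))
              * ((yj:ℝ) * (Real.sin (θ N) * ε N))) := by ring
        _ = ((zj:ℝ) * yk) * ((Real.sin (phiAng θ N - phiAng θ k) * ε k)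
              * (Real.sin (phiAng θ (N-1) - phiAng θ j) * ε j)) := by rw [hSk, hTj]
        _ = ((zj:ℝ) * yk) * (Real.sin (phiAng θ N - phiAng θ k)
              * Real.sin (phiAng θ (N-1) - phiAng θ j)) * (ε j * ε k) := by ring
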